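/- Let l and R be convex functions on ℝ with continuous second derivatives and let R have a finite minimizer. Fix (X, y) with X ∈ ℝ^{n×p} and δ = n/p. Define ψ(x, θ) := θ l'( η_l(x, θ) ) and let η, η_l be the proximal operators of R and l respectively. Then the AMP fixed-point system { β = η( β + Xᵀ ψ(z, θ)/⟨ψ'(z, θ)⟩, τ ); z = y − Xβ + ψ(z, θ); ⟨ψ'(z, θ)⟩ = (1/δ) ⟨ η'( β + Xᵀψ(z, θ)/⟨ψ'(z, θ)⟩, τ ) ⟩; γ = τ · ⟨ l''(y − Xβ) / (1 + θ l''(y − Xβ)) ⟩ } in the unknowns (β, z, θ, τ, γ) is equivalent to the system { 0 = −Xᵀ l'(y − Xβ) + γ R'(β); γ = ⟨ l''(y − Xβ) / ( 1/τ + (1/(δγ))⟨1/(1+τR''(β))⟩ · l''(y − Xβ) ) ⟩; θ = (1/(δγ)) ⟨ τ/(1+τR''(β)) ⟩; z = y − Xβ + θ · l'(y − Xβ) }. -/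

import Mathlib

open MeasureTheory ProbabilityTheory Matrix Filter Finset
open scoped NNReal ENNReal

noncomputable section

/-- The second derivative of a function `ℝ → ℝ`. -/
def D2 (f : ℝ → ℝ) : ℝ → ℝ := deriv (deriv f)

/-- The average `⟨v⟩` of the entries of a finite vector. -/
def avg {m : ℕ} (v : Fin m → ℝ) : ℝ := (∑ i, v i) / m

/-- The Euclidean norm of a finite vector. -/
def vnorm {m : ℕ} (v : Fin m → ℝ) : ℝ := Real.sqrt (∑ i, v i ^ 2)

/-- `Z = O_p(a)`: stochastic boundedness in probability at rate `a`. -/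
def IsBigOp {Ω : Type} [MeasureSpace Ω] (Z : ℕ → Ω → ℝ) (a : ℕ → ℝ) : Prop :=
  ∀ ε : ℝ, 0 < ε → ∃ C : ℝ, 0 < C ∧ ∃ N : ℕ, ∀ k : ℕ, N < k →
    (MeasureTheory.volume {ω : Ω | C * a k < |Z k ω|}).toReal ≤ ε

/-- `Z = O_p(plog(n) · a)`: stochastic boundedness up to a polylogarithmic factor in `n`. -/
def IsBigOpPlog {Ω : Type} [MeasureSpace Ω] (Z : ℕ → Ω → ℝ) (nn : ℕ → ℕ) (a : ℕ → ℝ) : Prop :=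
  ∃ m : ℕ, IsBigOp Z fun k => Real.log (nn k) ^ m * a k

/-- The response vector `y = Xβ₀ + w`. -/
def yvec {n p : ℕ} (X : Matrix (Fin n) (Fin p) ℝ) (b0 : Fin p → ℝ) (w : Fin n → ℝ) :
    Fin n → ℝ := X *ᵥ b0 + w

/-- The residual vector `y - Xb`. -/
def resid {n p : ℕ} (X : Matrix (Fin n) (Fin p) ℝ) (y : Fin n → ℝ) (b : Fin p → ℝ) :
    Fin n → ℝ := fun i => y i - (X *ᵥ b) i

/-- The penalized empirical risk objective. -/
def obj (l R : ℝ → ℝ) (lam : ℝ) {n p : ℕ} (X : Matrix (Fin n) (Fin p) ℝ)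
    (y : Fin n → ℝ) (b : Fin p → ℝ) : ℝ :=
  (∑ i, l (y i - (X *ᵥ b) i)) + lam * ∑ j, R (b j)

/-- The leave-observation-`i`-out objective. -/
def objLoo (l R : ℝ → ℝ) (lam : ℝ) {n p : ℕ} (X : Matrix (Fin n) (Fin p) ℝ)
    (y : Fin n → ℝ) (i : Fin n) (b : Fin p → ℝ) : ℝ :=
  (∑ j ∈ Finset.univ.erase i, l (y j - (X *ᵥ b) j)) + lam * ∑ j, R (b j)

/-- The matrix `Xᵀ diag(l''(y - Xb)) X - l''((y-Xb)_i) x_i x_iᵀ + λ diag(R''(b) + c₃)`;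
with `c₃ = 0` this is `Ã_i` (for `b` the leave-`i`-out estimate) or `Â_i` (for `b = β̂`). -/
def Amat (l R : ℝ → ℝ) (lam c3 : ℝ) {n p : ℕ} (X : Matrix (Fin n) (Fin p) ℝ)
    (y : Fin n → ℝ) (i : Fin n) (b : Fin p → ℝ) : Matrix (Fin p) (Fin p) ℝ :=
  Xᵀ * Matrix.diagonal (fun j => D2 l (resid X y b j)) * X
    - D2 l (resid X y b i) • Matrix.vecMulVec (X i) (X i)
    + lam • Matrix.diagonal (fun j => D2 R (b j) + c3)

/-- The matrix `Xᵀ diag(l''(y - Xb)) X + λ diag(R''(b) + c₃)` (no rank-one correction). -/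
def Afull (l R : ℝ → ℝ) (lam c3 : ℝ) {n p : ℕ} (X : Matrix (Fin n) (Fin p) ℝ)
    (y : Fin n → ℝ) (b : Fin p → ℝ) : Matrix (Fin p) (Fin p) ℝ :=
  Xᵀ * Matrix.diagonal (fun j => D2 l (resid X y b j)) * X
    + lam • Matrix.diagonal (fun j => D2 R (b j) + c3)


open Topology in
private lemma my_deriv_nonneg_of_monotone {g : ℝ → ℝ} (hg : Monotone g) (x : ℝ) :
    0 ≤ deriv g x := by
  by_cases h : DifferentiableAt ℝ g x
  · have ht : Tendsto (slope g x) (𝓝[>] x) (𝓝 (deriv g x)) :=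
      (hasDerivAt_iff_tendsto_slope.mp h.hasDerivAt).mono_left
        (nhdsWithin_mono x fun t (ht : x < t) =>
          Set.mem_compl_singleton_iff.mpr (ne_of_gt ht))
    refine ge_of_tendsto ht ?_
    filter_upwards [self_mem_nhdsWithin] with t ht
    rw [slope_def_field]
    exact div_nonneg (sub_nonneg.2 (hg (le_of_lt ht))) (sub_nonneg.2 (le_of_lt ht))
  · simp [deriv_zero_of_not_differentiableAt h]

private lemma my_D2_nonneg {f : ℝ → ℝ} (hconv : ConvexOn ℝ Set.univ f)
    (hdiff : Differentiable ℝ f) (t : ℝ) : 0 ≤ D2 f t := by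
  unfold D2
  exact my_deriv_nonneg_of_monotone
    (monotoneOn_univ.mp (hconv.monotoneOn_deriv fun s _ => hdiff s)) t

private lemma my_prox_hasDerivAt (f : ℝ → ℝ) (hdiff : Differentiable ℝ f) (x θ t : ℝ) :
    HasDerivAt (fun s : ℝ => 1 / 2 * (x - s) ^ 2 + θ * f s) (t - x + θ * deriv f t) t := by
  have h1 : HasDerivAt (fun s : ℝ => x - s) (-1) t := (hasDerivAt_id t).const_sub x
  have h2 := (h1.fun_pow (n := 2)).const_mul (1 / 2 : ℝ)
  have h3 := ((hdiff t).hasDerivAt).const_mul θ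
  have h := h2.fun_add h3
  refine h.congr_deriv ?_
  push_cast
  ring

private lemma my_prox_mono (f : ℝ → ℝ) (hconv : ConvexOn ℝ Set.univ f)
    (hdiff : Differentiable ℝ f) {θ : ℝ} (hθ : 0 < θ) :
    StrictMono (fun t : ℝ => t - (0:ℝ) + θ * deriv f t) := by
  have hmono : Monotone (deriv f) :=
    monotoneOn_univ.mp (hconv.monotoneOn_deriv fun s _ => hdiff s)
  intro a b hab
  have := mul_le_mul_of_nonneg_left (hmono hab.le) hθ.le
  dsimp only
  linarith

private lemma my_prox_iff (f : ℝ → ℝ) (hconv : ConvexOn ℝ Set.univ f)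
    (hdiff : Differentiable ℝ f) (x θ m : ℝ) (hθ : 0 < θ) :
    IsMinOn (fun t : ℝ => 1 / 2 * (x - t) ^ 2 + θ * f t) Set.univ m ↔
      x - m = θ * deriv f m := by
  have hg := fun t => my_prox_hasDerivAt f hdiff x θ t
  have hgd : Differentiable ℝ (fun s : ℝ => 1 / 2 * (x - s) ^ 2 + θ * f s) :=
    fun t => (hg t).differentiableAt
  have hderiv : deriv (fun s : ℝ => 1 / 2 * (x - s) ^ 2 + θ * f s) =
      fun t => t - x + θ * deriv f t := funext fun t => (hg t).deriv
  have hmono : Monotone (deriv f) :=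
    monotoneOn_univ.mp (hconv.monotoneOn_deriv fun s _ => hdiff s)
  constructor
  · intro h
    have hloc : IsLocalMin (fun t : ℝ => 1 / 2 * (x - t) ^ 2 + θ * f t) m :=
      h.isLocalMin Filter.univ_mem
    have h0 := hloc.hasDerivAt_eq_zero (hg m)
    linarith
  · intro h
    have hgc : ConvexOn ℝ Set.univ (fun s : ℝ => 1 / 2 * (x - s) ^ 2 + θ * f s) := by
      apply Monotone.convexOn_univ_of_deriv hgd
      rw [hderiv]
      intro a b hab
      have := mul_le_mul_of_nonneg_left (hmono hab) hθ.le
      dsimp only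
      linarith
    have hd0 : deriv (fun s : ℝ => 1 / 2 * (x - s) ^ 2 + θ * f s) m = 0 := by
      rw [hderiv]; dsimp only; linarith
    rw [isMinOn_iff]
    intro t _
    rcases lt_trichotomy t m with hlt | heq | hgt
    · have hs := hgc.slope_le_deriv (Set.mem_univ t) (Set.mem_univ m) hlt (hgd m)
      rw [hd0, slope_def_field] at hs
      have h2 : (0:ℝ) < m - t := by linarith
      have h3 := (div_le_iff₀ h2).mp hs
      linarith
    · rw [heq]
    · have hs := hgc.deriv_le_slope (Set.mem_univ m) (Set.mem_univ t) hgt (hgd m)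
      rw [hd0, slope_def_field] at hs
      have h2 : (0:ℝ) < t - m := by linarith
      have h3 := (le_div_iff₀ h2).mp hs
      linarith

private lemma my_prox_strict (f : ℝ → ℝ) (hconv : ConvexOn ℝ Set.univ f)
    (hdiff : Differentiable ℝ f) (x θ : ℝ) (hθ : 0 < θ) :
    StrictConvexOn ℝ Set.univ (fun t : ℝ => 1 / 2 * (x - t) ^ 2 + θ * f t) := by
  have hg := fun t => my_prox_hasDerivAt f hdiff x θ t
  have hgd : Differentiable ℝ (fun s : ℝ => 1 / 2 * (x - s) ^ 2 + θ * f s) :=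
    fun t => (hg t).differentiableAt
  have hderiv : deriv (fun s : ℝ => 1 / 2 * (x - s) ^ 2 + θ * f s) =
      fun t => t - x + θ * deriv f t := funext fun t => (hg t).deriv
  have hmono : Monotone (deriv f) :=
    monotoneOn_univ.mp (hconv.monotoneOn_deriv fun s _ => hdiff s)
  apply StrictMono.strictConvexOn_univ_of_deriv hgd.continuous
  rw [hderiv]
  intro a b hab
  have := mul_le_mul_of_nonneg_left (hmono hab.le) hθ.le
  dsimp only
  linarith

private lemma my_avg_congr {m : ℕ} {v w : Fin m → ℝ} (h : ∀ i, v i = w i) : avg v = avg w := by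
  unfold avg
  congr 1
  exact Finset.sum_congr rfl fun i _ => h i

private lemma my_avg_mul {m : ℕ} (k : ℝ) (v : Fin m → ℝ) :
    avg (fun i => k * v i) = k * avg v := by
  unfold avg
  rw [← Finset.mul_sum, mul_div_assoc]

private lemma my_avg_pos {m : ℕ} (hm : 0 < m) {v : Fin m → ℝ} (h : ∀ i, 0 < v i) : 0 < avg v := by
  unfold avg
  have : Nonempty (Fin m) := ⟨⟨0, hm⟩⟩
  exact div_pos (Finset.sum_pos (fun i _ => h i) Finset.univ_nonempty) (by exact_mod_cast hm)

/-- The AMP fixed-point system is equivalent to the system describing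
the regularized estimator together with the AMP calibration equations. -/
theorem amp_fixed_point_equivalence
    (l R : ℝ → ℝ)
    (hlconv : ConvexOn ℝ Set.univ l) (hRconv : ConvexOn ℝ Set.univ R)
    (hlC2 : ContDiff ℝ 2 l) (hRC2 : ContDiff ℝ 2 R)
    (hRmin : ∃ x0 : ℝ, ∀ x : ℝ, R x0 ≤ R x)
    (n p : ℕ) (hn : 0 < n) (hp : 0 < p)
    (δ : ℝ) (hδ : δ = (n : ℝ) / p)
    (X : Matrix (Fin n) (Fin p) ℝ) (y : Fin n → ℝ)
    (η ηl : ℝ → ℝ → ℝ)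
    (hη : ∀ x τ : ℝ, 0 < τ →
      IsMinOn (fun t : ℝ => 1 / 2 * (x - t) ^ 2 + τ * R t) Set.univ (η x τ))
    (hηl : ∀ x θ : ℝ, 0 < θ →
      IsMinOn (fun t : ℝ => 1 / 2 * (x - t) ^ 2 + θ * l t) Set.univ (ηl x θ))
    (ψ : ℝ → ℝ → ℝ) (hψ : ∀ x θ : ℝ, ψ x θ = θ * deriv l (ηl x θ))
    (ψ' : ℝ → ℝ → ℝ)
    (hψ' : ∀ x θ : ℝ, ψ' x θ = θ * D2 l (ηl x θ) / (1 + θ * D2 l (ηl x θ)))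
    (η' : ℝ → ℝ → ℝ)
    (hη' : ∀ x τ : ℝ, η' x τ = 1 / (1 + τ * D2 R (η x τ))) :
    ∀ (β : Fin p → ℝ) (z : Fin n → ℝ) (θ τ γ : ℝ), 0 < θ → 0 < τ → 0 < γ →
      (((∀ j, β j = η (β j +
            (Xᵀ *ᵥ fun i => ψ (z i) θ / avg (fun i' => ψ' (z i') θ)) j) τ) ∧
        (∀ i, z i = y i - (X *ᵥ β) i + ψ (z i) θ) ∧
        avg (fun i => ψ' (z i) θ) = 1 / δ * avg (fun j =>
          η' (β j + (Xᵀ *ᵥ fun i => ψ (z i) θ / avg (fun i' => ψ' (z i') θ)) j) τ) ∧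
        γ = τ * avg (fun i =>
          D2 l (y i - (X *ᵥ β) i) / (1 + θ * D2 l (y i - (X *ᵥ β) i))))
      ↔
      ((∀ j, 0 = -((Xᵀ *ᵥ fun i => deriv l (y i - (X *ᵥ β) i)) j) + γ * deriv R (β j)) ∧
        γ = avg (fun i => D2 l (y i - (X *ᵥ β) i) /
              (1 / τ + 1 / (δ * γ) * avg (fun j => 1 / (1 + τ * D2 R (β j))) *
                D2 l (y i - (X *ᵥ β) i))) ∧
        θ = 1 / (δ * γ) * avg (fun j => τ / (1 + τ * D2 R (β j))) ∧
        (∀ i, z i = y i - (X *ᵥ β) i + θ * deriv l (y i - (X *ᵥ β) i)))) := by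
  intro β z θ τ γ hθ hτ hγ
  have hθ0 : θ ≠ 0 := ne_of_gt hθ
  have hτ0 : τ ≠ 0 := ne_of_gt hτ
  have hγ0 : γ ≠ 0 := ne_of_gt hγ
  have hδ0 : (0:ℝ) < δ := by
    rw [hδ]
    exact div_pos (by exact_mod_cast hn) (by exact_mod_cast hp)
  have hδ0' : δ ≠ 0 := ne_of_gt hδ0
  have hl1 : Differentiable ℝ l := hlC2.differentiable (by norm_num)
  have hR1 : Differentiable ℝ R := hRC2.differentiable (by norm_num)
  have hLnn : ∀ t : ℝ, 0 ≤ D2 l t := my_D2_nonneg hlconv hl1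
  have hRnn : ∀ t : ℝ, 0 ≤ D2 R t := my_D2_nonneg hRconv hR1
  have hlm : ∀ i : Fin n, 0 < 1 + θ * D2 l (y i - (X *ᵥ β) i) := fun i => by
    nlinarith [hLnn (y i - (X *ᵥ β) i)]
  have hRm : ∀ j : Fin p, 0 < 1 + τ * D2 R (β j) := fun j => by
    nlinarith [hRnn (β j)]
  set A := avg (fun j => 1 / (1 + τ * D2 R (β j))) with hAdef
  have hApos : 0 < A := by
    rw [hAdef]
    exact my_avg_pos hp fun j => one_div_pos.mpr (hRm j)
  have hA0 : A ≠ 0 := ne_of_gt hApos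
  have hτA : avg (fun j => τ / (1 + τ * D2 R (β j))) = τ * A := by
    rw [hAdef, ← my_avg_mul]
    exact my_avg_congr fun j => (mul_one_div τ _).symm
  have hterm : ∀ i : Fin n,
      D2 l (y i - (X *ᵥ β) i) / (1 / τ + θ / τ * D2 l (y i - (X *ᵥ β) i))
      = τ * (D2 l (y i - (X *ᵥ β) i) / (1 + θ * D2 l (y i - (X *ᵥ β) i))) := by
    intro i
    have h1 := hlm i
    have h1' : (1 + θ * D2 l (y i - (X *ᵥ β) i)) ≠ 0 := ne_of_gt h1
    field_simp
  constructor
  · rintro ⟨h1, h2, h3, h4⟩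
    set c := avg (fun i => ψ' (z i) θ) with hcdef
    have hprox : ∀ i, ηl (z i) θ = y i - (X *ᵥ β) i := by
      intro i
      have hfo := (my_prox_iff l hlconv hl1 (z i) θ (ηl (z i) θ) hθ).mp (hηl (z i) θ hθ)
      have hψi := hψ (z i) θ
      have h2i := h2 i
      linarith
    have hψe : ∀ i, ψ (z i) θ = θ * deriv l (y i - (X *ᵥ β) i) := fun i => by
      rw [hψ, hprox i]
    have hψ'e : ∀ i : Fin n, ψ' (z i) θ =
        θ * (D2 l (y i - (X *ᵥ β) i) / (1 + θ * D2 l (y i - (X *ᵥ β) i))) := fun i => by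
      rw [hψ', hprox i, mul_div_assoc]
    have havgL : avg (fun i => D2 l (y i - (X *ᵥ β) i) /
        (1 + θ * D2 l (y i - (X *ᵥ β) i))) = γ / τ := by
      rw [h4]
      field_simp
      exact my_avg_congr fun i => by ring
    have hcγ : c = θ * γ / τ := by
      rw [hcdef, my_avg_congr hψ'e, my_avg_mul, havgL]
      ring
    have hc0 : c ≠ 0 := by rw [hcγ]; positivity
    have hvec : (fun i => ψ (z i) θ / c) =
        (θ / c) • (fun i => deriv l (y i - (X *ᵥ β) i)) := by
      funext i
      rw [Pi.smul_apply, smul_eq_mul, hψe i]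
      ring
    have hXv : ∀ j, (Xᵀ *ᵥ fun i => ψ (z i) θ / c) j
        = (θ / c) * (Xᵀ *ᵥ fun i => deriv l (y i - (X *ᵥ β) i)) j := by
      intro j
      rw [hvec, Matrix.mulVec_smul, Pi.smul_apply, smul_eq_mul]
    have hfoR : ∀ j, (θ / c) * (Xᵀ *ᵥ fun i => deriv l (y i - (X *ᵥ β) i)) j
        = τ * deriv R (β j) := by
      intro j
      have hmin := hη (β j + (Xᵀ *ᵥ fun i => ψ (z i) θ / c) j) τ hτ
      rw [← h1 j] at hmin
      have hfo := (my_prox_iff R hRconv hR1 _ τ (β j) hτ).mp hmin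
      rw [← hXv j]
      linarith
    have hθc : θ / c = τ / γ := by
      rw [hcγ]
      field_simp
    have hG : ∀ j, (Xᵀ *ᵥ fun i => deriv l (y i - (X *ᵥ β) i)) j
        = γ * deriv R (β j) := by
      intro j
      have h5 := hfoR j
      rw [hθc, div_mul_eq_mul_div, div_eq_iff hγ0] at h5
      have h9 : τ * (Xᵀ *ᵥ fun i => deriv l (y i - (X *ᵥ β) i)) j
          = τ * (γ * deriv R (β j)) := by linear_combination h5
      exact mul_left_cancel₀ hτ0 h9
    have he : ∀ j, η' (β j + (Xᵀ *ᵥ fun i => ψ (z i) θ / c) j) τ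
        = 1 / (1 + τ * D2 R (β j)) := by
      intro j
      rw [hη', ← h1 j]
    have h3' : c = 1 / δ * A := by rw [h3, my_avg_congr he, hAdef]
    have hkey : 1 / (δ * γ) * A = θ / τ := by
      have h6 := h3'.symm.trans hcγ
      field_simp at h6 ⊢
      linear_combination h6
    refine ⟨?_, ?_, ?_, ?_⟩
    · intro j
      have := hG j
      linarith
    · rw [hkey, my_avg_congr hterm, my_avg_mul, havgL]
      field_simp
    · rw [hτA]
      field_simp at hkey ⊢
      linarith [hkey]
    · intro i
      rw [← hψe i]
      exact h2 i
  · rintro ⟨g1, g2, g3, g4⟩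
    rw [hτA] at g3
    have hkey : 1 / (δ * γ) * A = θ / τ := by
      rw [g3]
      field_simp
    rw [hkey, my_avg_congr hterm, my_avg_mul] at g2
    have havgL : avg (fun i => D2 l (y i - (X *ᵥ β) i) /
        (1 + θ * D2 l (y i - (X *ᵥ β) i))) = γ / τ := by
      rw [g2]
      field_simp
      exact my_avg_congr fun i => by ring
    set c := avg (fun i => ψ' (z i) θ) with hcdef
    have hprox : ∀ i, ηl (z i) θ = y i - (X *ᵥ β) i := by
      intro i
      have hfo : z i - (y i - (X *ᵥ β) i) = θ * deriv l (y i - (X *ᵥ β) i) := by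
        rw [g4 i]
        ring
      exact (my_prox_strict l hlconv hl1 (z i) θ hθ).eq_of_isMinOn (hηl (z i) θ hθ)
        ((my_prox_iff l hlconv hl1 (z i) θ _ hθ).mpr hfo) (Set.mem_univ _) (Set.mem_univ _)
    have hψe : ∀ i, ψ (z i) θ = θ * deriv l (y i - (X *ᵥ β) i) := fun i => by
      rw [hψ, hprox i]
    have hψ'e : ∀ i : Fin n, ψ' (z i) θ =
        θ * (D2 l (y i - (X *ᵥ β) i) / (1 + θ * D2 l (y i - (X *ᵥ β) i))) := fun i => by
      rw [hψ', hprox i, mul_div_assoc]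
    have hcγ : c = θ * γ / τ := by
      rw [hcdef, my_avg_congr hψ'e, my_avg_mul, havgL]
      ring
    have hc0 : c ≠ 0 := by rw [hcγ]; positivity
    have hvec : (fun i => ψ (z i) θ / c) =
        (θ / c) • (fun i => deriv l (y i - (X *ᵥ β) i)) := by
      funext i
      rw [Pi.smul_apply, smul_eq_mul, hψe i]
      ring
    have hXv : ∀ j, (Xᵀ *ᵥ fun i => ψ (z i) θ / c) j
        = (θ / c) * (Xᵀ *ᵥ fun i => deriv l (y i - (X *ᵥ β) i)) j := by
      intro j
      rw [hvec, Matrix.mulVec_smul, Pi.smul_apply, smul_eq_mul]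
    have hbe : ∀ j, β j = η (β j + (Xᵀ *ᵥ fun i => ψ (z i) θ / c) j) τ := by
      intro j
      have hGj : (Xᵀ *ᵥ fun i => deriv l (y i - (X *ᵥ β) i)) j = γ * deriv R (β j) := by
        linarith [g1 j]
      have harg : (Xᵀ *ᵥ fun i => ψ (z i) θ / c) j = τ * deriv R (β j) := by
        rw [hXv j, hGj, hcγ]
        field_simp
      have hfo : β j + (Xᵀ *ᵥ fun i => ψ (z i) θ / c) j - β j = τ * deriv R (β j) := by
        rw [harg]
        ring
      exact (my_prox_strict R hRconv hR1 _ τ hτ).eq_of_isMinOn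
        ((my_prox_iff R hRconv hR1 _ τ (β j) hτ).mpr hfo) (hη _ τ hτ)
        (Set.mem_univ _) (Set.mem_univ _)
    refine ⟨hbe, ?_, ?_, ?_⟩
    · intro i
      rw [hψe i]
      exact g4 i
    · have he : ∀ j, η' (β j + (Xᵀ *ᵥ fun i => ψ (z i) θ / c) j) τ
          = 1 / (1 + τ * D2 R (β j)) := by
        intro j
        rw [hη', ← hbe j]
      rw [my_avg_congr he, ← hAdef, hcγ]
      field_simp at hkey ⊢
      linarith [hkey]
    · exact g2
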